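/- arXiv:1707.07495 — 3 statements merged into one kernel-verified Lean document; each statement's English description precedes it below -/
import Mathlib

section
/- The energy functional can be rewritten as: E(u₁,u₂) = ∫(|∇u₁|²+|∇u₂|²) − (a*/2)∫(u₁²+u₂²)² + ∫V₁u₁² + ∫V₂u₂² + (1/2)∫(√(a*−a₁)u₁² − √(a*−a₂)u₂²)² + (β*−β)∫u₁²u₂², for any u₁, u₂ ∈ H¹(ℝ²)∩L⁴, where β* = a* + √((a*−a₁)(a*−a₂)) and 0 < a₁, a₂ ≤ a*. -/
open MeasureTheory Real Filter

noncomputable section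

abbrev E2 := EuclideanSpace ℝ (Fin 2)

/-- the rewriting (1.17) of the GP energy functional. -/
theorem energy_rewriting
    (astar a₁ a₂ β : ℝ)
    (ha₁ : 0 < a₁) (ha₁' : a₁ ≤ astar)
    (ha₂ : 0 < a₂) (ha₂' : a₂ ≤ astar)
    (βstar : ℝ)
    (hβstar : βstar = astar + Real.sqrt ((astar - a₁) * (astar - a₂)))
    (V₁ V₂ : E2 → ℝ) (u₁ u₂ : E2 → ℝ)
    (hu₁4 : Integrable (fun x => u₁ x ^ 4) (volume : Measure E2))
    (hu₂4 : Integrable (fun x => u₂ x ^ 4) (volume : Measure E2))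
    (hV₁ : Integrable (fun x => V₁ x * u₁ x ^ 2) (volume : Measure E2))
    (hV₂ : Integrable (fun x => V₂ x * u₂ x ^ 2) (volume : Measure E2))
    (hgrad : Integrable (fun x => ‖fderiv ℝ u₁ x‖ ^ 2 + ‖fderiv ℝ u₂ x‖ ^ 2)
      (volume : Measure E2)) :
    (∫ x, ‖fderiv ℝ u₁ x‖ ^ 2 + ‖fderiv ℝ u₂ x‖ ^ 2)
      + (∫ x, V₁ x * u₁ x ^ 2 + V₂ x * u₂ x ^ 2)
      - (∫ x, (a₁ / 2) * u₁ x ^ 4 + (a₂ / 2) * u₂ x ^ 4 + β * u₁ x ^ 2 * u₂ x ^ 2) =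
    (∫ x, ‖fderiv ℝ u₁ x‖ ^ 2 + ‖fderiv ℝ u₂ x‖ ^ 2)
      - (astar / 2) * (∫ x, (u₁ x ^ 2 + u₂ x ^ 2) ^ 2)
      + (∫ x, V₁ x * u₁ x ^ 2)
      + (∫ x, V₂ x * u₂ x ^ 2)
      + (1 / 2) * (∫ x, (Real.sqrt (astar - a₁) * u₁ x ^ 2
            - Real.sqrt (astar - a₂) * u₂ x ^ 2) ^ 2)
      + (βstar - β) * ∫ x, u₁ x ^ 2 * u₂ x ^ 2 := by

  set s₁ := Real.sqrt (astar - a₁) with hs₁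
  set s₂ := Real.sqrt (astar - a₂) with hs₂
  have h1n : (0:ℝ) ≤ astar - a₁ := by linarith
  have h2n : (0:ℝ) ≤ astar - a₂ := by linarith
  have hs₁sq : s₁ ^ 2 = astar - a₁ := Real.sq_sqrt h1n
  have hs₂sq : s₂ ^ 2 = astar - a₂ := Real.sq_sqrt h2n
  have hs₁₂ : s₁ * s₂ = Real.sqrt ((astar - a₁) * (astar - a₂)) :=
    (Real.sqrt_mul h1n _).symm
  -- measurability of u₁², u₂²
  have hm1 : AEStronglyMeasurable (fun x => u₁ x ^ 2) (volume : Measure E2) := by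
    have h := Real.continuous_sqrt.comp_aestronglyMeasurable hu₁4.aestronglyMeasurable
    have he : (fun x => Real.sqrt (u₁ x ^ 4)) = fun x => u₁ x ^ 2 := by
      funext x
      rw [show u₁ x ^ 4 = (u₁ x ^ 2) ^ 2 by ring, Real.sqrt_sq (sq_nonneg _)]
    simpa [Function.comp, he] using h
  have hm2 : AEStronglyMeasurable (fun x => u₂ x ^ 2) (volume : Measure E2) := by
    have h := Real.continuous_sqrt.comp_aestronglyMeasurable hu₂4.aestronglyMeasurable
    have he : (fun x => Real.sqrt (u₂ x ^ 4)) = fun x => u₂ x ^ 2 := by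
      funext x
      rw [show u₂ x ^ 4 = (u₂ x ^ 2) ^ 2 by ring, Real.sqrt_sq (sq_nonneg _)]
    simpa [Function.comp, he] using h
  have hsum : Integrable (fun x : E2 => u₁ x ^ 4 + u₂ x ^ 4) volume := hu₁4.add hu₂4
  have hC : Integrable (fun x => u₁ x ^ 2 * u₂ x ^ 2) (volume : Measure E2) := by
    refine hsum.mono (hm1.mul hm2) ?_
    filter_upwards with x
    have h1 : (0:ℝ) ≤ u₁ x ^ 2 * u₂ x ^ 2 := by positivity
    have h2 : u₁ x ^ 2 * u₂ x ^ 2 ≤ u₁ x ^ 4 + u₂ x ^ 4 := by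
      nlinarith [sq_nonneg (u₁ x ^ 2 - u₂ x ^ 2)]
    have h3 : (0:ℝ) ≤ u₁ x ^ 4 + u₂ x ^ 4 := by positivity
    simp only [Real.norm_eq_abs, abs_of_nonneg h1, abs_of_nonneg h3]
    exact h2
  have h4 : (∫ x, V₁ x * u₁ x ^ 2 + V₂ x * u₂ x ^ 2 ∂(volume : Measure E2))
      = (∫ x, V₁ x * u₁ x ^ 2) + (∫ x, V₂ x * u₂ x ^ 2) := integral_add hV₁ hV₂
  have hC2 : Integrable (fun x : E2 => 2 * (u₁ x ^ 2 * u₂ x ^ 2)) volume := hC.const_mul 2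
  have h1 : (∫ x, (u₁ x ^ 2 + u₂ x ^ 2) ^ 2 ∂(volume : Measure E2))
      = (∫ x, u₁ x ^ 4) + (∫ x, u₂ x ^ 4) + 2 * (∫ x, u₁ x ^ 2 * u₂ x ^ 2) := by
    have he : (fun x : E2 => (u₁ x ^ 2 + u₂ x ^ 2) ^ 2)
        = fun x => (u₁ x ^ 4 + u₂ x ^ 4) + 2 * (u₁ x ^ 2 * u₂ x ^ 2) := by
      funext x; ring
    rw [he, integral_add hsum hC2, integral_add hu₁4 hu₂4, integral_const_mul]
  have hA1 : Integrable (fun x : E2 => s₁ ^ 2 * u₁ x ^ 4 + s₂ ^ 2 * u₂ x ^ 4) volume :=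
    (hu₁4.const_mul _).add (hu₂4.const_mul _)
  have hC3 : Integrable (fun x : E2 => (2 * s₁ * s₂) * (u₁ x ^ 2 * u₂ x ^ 2)) volume :=
    hC.const_mul _
  have h2 : (∫ x, (s₁ * u₁ x ^ 2 - s₂ * u₂ x ^ 2) ^ 2 ∂(volume : Measure E2))
      = s₁ ^ 2 * (∫ x, u₁ x ^ 4) + s₂ ^ 2 * (∫ x, u₂ x ^ 4)
        - (2 * s₁ * s₂) * (∫ x, u₁ x ^ 2 * u₂ x ^ 2) := by
    have he : (fun x : E2 => (s₁ * u₁ x ^ 2 - s₂ * u₂ x ^ 2) ^ 2)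
        = fun x => (s₁ ^ 2 * u₁ x ^ 4 + s₂ ^ 2 * u₂ x ^ 4)
            - (2 * s₁ * s₂) * (u₁ x ^ 2 * u₂ x ^ 2) := by
      funext x; ring
    rw [he, integral_sub hA1 hC3,
      integral_add ((hu₁4.const_mul _ : Integrable (fun x : E2 => s₁ ^ 2 * u₁ x ^ 4) volume))
        ((hu₂4.const_mul _ : Integrable (fun x : E2 => s₂ ^ 2 * u₂ x ^ 4) volume)),
      integral_const_mul, integral_const_mul, integral_const_mul]
  have hA2 : Integrable (fun x : E2 => (a₁ / 2) * u₁ x ^ 4 + (a₂ / 2) * u₂ x ^ 4) volume :=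
    (hu₁4.const_mul _).add (hu₂4.const_mul _)
  have hC4 : Integrable (fun x : E2 => β * (u₁ x ^ 2 * u₂ x ^ 2)) volume := hC.const_mul _
  have h3 : (∫ x, (a₁ / 2) * u₁ x ^ 4 + (a₂ / 2) * u₂ x ^ 4 + β * u₁ x ^ 2 * u₂ x ^ 2
        ∂(volume : Measure E2))
      = (a₁ / 2) * (∫ x, u₁ x ^ 4) + (a₂ / 2) * (∫ x, u₂ x ^ 4)
        + β * (∫ x, u₁ x ^ 2 * u₂ x ^ 2) := by
    have he : (fun x : E2 => (a₁ / 2) * u₁ x ^ 4 + (a₂ / 2) * u₂ x ^ 4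
          + β * u₁ x ^ 2 * u₂ x ^ 2)
        = fun x => ((a₁ / 2) * u₁ x ^ 4 + (a₂ / 2) * u₂ x ^ 4)
            + β * (u₁ x ^ 2 * u₂ x ^ 2) := by
      funext x; ring
    rw [he, integral_add hA2 hC4,
      integral_add ((hu₁4.const_mul _ : Integrable (fun x : E2 => (a₁ / 2) * u₁ x ^ 4) volume))
        ((hu₂4.const_mul _ : Integrable (fun x : E2 => (a₂ / 2) * u₂ x ^ 4) volume)),
      integral_const_mul, integral_const_mul, integral_const_mul]
  rw [h1, h2, h3, h4, hβstar, ← hs₁₂]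
  linear_combination (-(∫ x, u₁ x ^ 4) / 2) * hs₁sq - ((∫ x, u₂ x ^ 4) / 2) * hs₂sq
end
end

section
/- For θ ∈ [0,1] and 0 < a₁, a₂ < a*, β ≤ β* = a* + √((a*−a₁)(a*−a₂)), one has a₁θ² + a₂(1−θ)² + 2βθ(1−θ) ≤ a*, with equality if and only if β = β* and θ = γ := √(a*−a₂)/(√(a*−a₁)+√(a*−a₂)). -/
/-- for `θ ∈ [0,1]`, `a₁θ² + a₂(1−θ)² + 2βθ(1−θ) ≤ a*`, with equality
iff `β = β*` and `θ = γ`. -/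
theorem quadratic_form_le_astar
    (astar a₁ a₂ β : ℝ)
    (ha₁ : 0 < a₁) (ha₁' : a₁ < astar)
    (ha₂ : 0 < a₂) (ha₂' : a₂ < astar)
    (hβ : β ≤ astar + Real.sqrt ((astar - a₁) * (astar - a₂)))
    (θ : ℝ) (hθ : θ ∈ Set.Icc (0 : ℝ) 1) :
    a₁ * θ ^ 2 + a₂ * (1 - θ) ^ 2 + 2 * β * θ * (1 - θ) ≤ astar ∧
    (a₁ * θ ^ 2 + a₂ * (1 - θ) ^ 2 + 2 * β * θ * (1 - θ) = astar ↔
      β = astar + Real.sqrt ((astar - a₁) * (astar - a₂)) ∧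
      θ = Real.sqrt (astar - a₂) /
        (Real.sqrt (astar - a₁) + Real.sqrt (astar - a₂))) := by
  obtain ⟨hθ0, hθ1⟩ := hθ
  set s := Real.sqrt (astar - a₁) with hs_def
  set t := Real.sqrt (astar - a₂) with ht_def
  have hs : 0 < s := Real.sqrt_pos.mpr (by linarith)
  have ht : 0 < t := Real.sqrt_pos.mpr (by linarith)
  have hs2 : s ^ 2 = astar - a₁ := Real.sq_sqrt (by linarith)
  have ht2 : t ^ 2 = astar - a₂ := Real.sq_sqrt (by linarith)
  have hst : Real.sqrt ((astar - a₁) * (astar - a₂)) = s * t := by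
    rw [Real.sqrt_mul (by linarith)]
  rw [hst] at hβ ⊢
  have hθθ : 0 ≤ θ * (1 - θ) := mul_nonneg hθ0 (by linarith)
  have key : astar - (a₁ * θ ^ 2 + a₂ * (1 - θ) ^ 2 + 2 * β * θ * (1 - θ)) =
      (s * θ - t * (1 - θ)) ^ 2 + 2 * ((astar + s * t) - β) * (θ * (1 - θ)) := by
    ring_nf
    nlinarith [hs2, ht2]
  have hle : a₁ * θ ^ 2 + a₂ * (1 - θ) ^ 2 + 2 * β * θ * (1 - θ) ≤ astar := by
    nlinarith [sq_nonneg (s * θ - t * (1 - θ)),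
      mul_nonneg (by linarith : (0:ℝ) ≤ (astar + s * t) - β) hθθ]
  refine ⟨hle, ⟨fun heq => ?_, fun ⟨hb, hth⟩ => ?_⟩⟩
  · have h0 : (s * θ - t * (1 - θ)) ^ 2 + 2 * ((astar + s * t) - β) * (θ * (1 - θ)) = 0 := by
      rw [← key, heq]; ring
    have h1 : (s * θ - t * (1 - θ)) ^ 2 = 0 := by
      nlinarith [sq_nonneg (s * θ - t * (1 - θ)),
        mul_nonneg (by linarith : (0:ℝ) ≤ (astar + s * t) - β) hθθ]
    have h2 : s * θ - t * (1 - θ) = 0 := by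
      exact pow_eq_zero_iff (n := 2) (by norm_num) |>.mp h1
    have hth : θ = t / (s + t) := by
      field_simp
      linarith
    have hθθ' : 0 < θ * (1 - θ) := by
      rw [hth]
      have hst' : 0 < s + t := by linarith
      have : (1 : ℝ) - t / (s + t) = s / (s + t) := by field_simp; ring
      rw [this]
      positivity
    have hb : β = astar + s * t := by
      have hprod : ((astar + s * t) - β) * (θ * (1 - θ)) = 0 := by
        linarith [h0, h1]
      rcases mul_eq_zero.mp hprod with h | h
      · linarith
      · exact absurd h (ne_of_gt hθθ')
    exact ⟨hb, hth⟩
  · have hst' : (s + t) ≠ 0 := by positivity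
    subst hb hth
    have h2 : s * (t / (s + t)) - t * (1 - t / (s + t)) = 0 := by
      field_simp; ring
    have h3 : astar - (a₁ * (t / (s + t)) ^ 2 + a₂ * (1 - t / (s + t)) ^ 2 +
        2 * (astar + s * t) * (t / (s + t)) * (1 - t / (s + t))) = 0 := by
      rw [key, h2]; ring
    linarith
end

section
/- Let w be the unique positive solution of Δw − w + w³ = 0 in ℝ², a₁ ∈ (0, a*), γ ∈ (0,1). Suppose ξ ∈ H¹(ℝ²) solves Δξ − ξ + (1 + (2a₁/a*)γ)w²ξ = (2γ/a*) w ∫_{ℝ²} w³ξ in ℝ². Then ∫_{ℝ²} w³ ξ = 0, and consequently ξ solves Δξ − ξ + c w²ξ = 0 with c = 1 + (2a₁/a*)γ ∈ (1,3). -/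
open MeasureTheory Real

noncomputable section

def lap (u : E2 → ℝ) (x : E2) : ℝ :=
  ∑ i : Fin 2, fderiv ℝ (fun y => fderiv ℝ u y (EuclideanSpace.single i 1)) x
    (EuclideanSpace.single i 1)

def H1 (u : E2 → ℝ) : Prop :=
  Differentiable ℝ u ∧ MemLp u 2 (volume : Measure E2) ∧
    MemLp (fun x => ‖fderiv ℝ u x‖) 2 (volume : Measure E2)

def chi (t : ℝ) : ℝ := Real.smoothTransition (2 - t)

lemma chi_contDiff {n : ℕ∞} : ContDiff ℝ n chi := by
  have : chi = Real.smoothTransition ∘ (fun t : ℝ => 2 - t) := rfl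
  rw [this]
  exact Real.smoothTransition.contDiff.comp (contDiff_const.sub contDiff_id)

lemma chi_one {t : ℝ} (h : t ≤ 1) : chi t = 1 :=
  Real.smoothTransition.one_of_one_le (by linarith)

lemma chi_zero {t : ℝ} (h : 2 ≤ t) : chi t = 0 :=
  Real.smoothTransition.zero_of_nonpos (by linarith)

lemma chi_mem {t : ℝ} : chi t ∈ Set.Icc (0:ℝ) 1 :=
  ⟨Real.smoothTransition.nonneg _, Real.smoothTransition.le_one _⟩

lemma deriv_chi_zero {t : ℝ} (h : t < 1 ∨ 2 < t) : deriv chi t = 0 := by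
  rcases h with h | h
  · have : deriv chi t = deriv (fun _ : ℝ => (1:ℝ)) t := by
      apply Filter.EventuallyEq.deriv_eq
      filter_upwards [Iio_mem_nhds h] with s hs
      exact chi_one (le_of_lt hs)
    simpa using this
  · have : deriv chi t = deriv (fun _ : ℝ => (0:ℝ)) t := by
      apply Filter.EventuallyEq.deriv_eq
      filter_upwards [Ioi_mem_nhds h] with s hs
      exact chi_zero (le_of_lt hs)
    simpa using this

lemma chi_deriv_bound : ∃ M : ℝ, 0 ≤ M ∧ ∀ t, |deriv chi t| ≤ M := by
  obtain ⟨M, hM⟩ := (isCompact_Icc (a := (1:ℝ)) (b := 2)).exists_bound_of_continuousOn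
    (((chi_contDiff (n := 1)).continuous_deriv le_rfl).continuousOn (s := Set.Icc 1 2))
  refine ⟨max M 0, le_max_right _ _, fun t => ?_⟩
  by_cases ht : t ∈ Set.Icc (1:ℝ) 2
  · exact le_trans (by simpa using hM t ht) (le_max_left _ _)
  · rw [deriv_chi_zero]
    · simp
    · rw [Set.mem_Icc, not_and_or] at ht
      rcases ht with h | h
      · exact Or.inl (lt_of_not_ge h)
      · exact Or.inr (lt_of_not_ge h)

def phi (n : ℕ) (x : E2) : ℝ := chi (‖x‖ ^ 2 / ((n : ℝ) + 1) ^ 2)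

lemma rn_pos (n : ℕ) : (0:ℝ) < ((n : ℝ) + 1) ^ 2 := by positivity

lemma phi_contDiff (n : ℕ) {m : ℕ∞} : ContDiff ℝ m (phi n) := by
  have : phi n = chi ∘ (fun x : E2 => ‖x‖ ^ 2 / ((n : ℝ) + 1) ^ 2) := rfl
  rw [this]
  exact chi_contDiff.comp (contDiff_norm_sq ℝ |>.div_const _)

lemma phi_hasFDerivAt (n : ℕ) (x : E2) :
    HasFDerivAt (phi n)
      ((deriv chi (‖x‖ ^ 2 / ((n : ℝ) + 1) ^ 2)) •
        ((((n : ℝ) + 1) ^ 2)⁻¹ • (2 • (innerSL ℝ x)))) x := by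
  have h1 : HasFDerivAt (fun y : E2 => ‖y‖ ^ 2 / ((n : ℝ) + 1) ^ 2)
      ((((n : ℝ) + 1) ^ 2)⁻¹ • (2 • (innerSL ℝ x))) x := by
    have := ((hasStrictFDerivAt_norm_sq x).hasFDerivAt).const_smul ((((n : ℝ) + 1) ^ 2)⁻¹)
    simpa [div_eq_inv_mul, smul_eq_mul, Pi.smul_def] using this
  have h2 : HasDerivAt chi (deriv chi (‖x‖ ^ 2 / ((n : ℝ) + 1) ^ 2))
      (‖x‖ ^ 2 / ((n : ℝ) + 1) ^ 2) :=
    ((chi_contDiff (n := 1)).differentiable (by norm_num) _).hasDerivAt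
  exact h2.comp_hasFDerivAt x h1

lemma phi_one (n : ℕ) {x : E2} (h : ‖x‖ ^ 2 ≤ ((n : ℝ) + 1) ^ 2) : phi n x = 1 :=
  chi_one ((div_le_one (rn_pos n)).2 h)

lemma phi_mem (n : ℕ) (x : E2) : phi n x ∈ Set.Icc (0:ℝ) 1 := chi_mem

lemma phi_supp (n : ℕ) {x : E2} (h : 2 * ((n : ℝ) + 1) ^ 2 ≤ ‖x‖ ^ 2) : phi n x = 0 :=
  chi_zero (by rw [le_div_iff₀ (rn_pos n)]; linarith)

lemma phi_compactSupport (n : ℕ) : HasCompactSupport (phi n) := by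
  apply HasCompactSupport.intro (isCompact_closedBall (0 : E2) (((n:ℝ)+1) * 2))
  intro x hx
  apply phi_supp
  simp only [Metric.mem_closedBall, dist_zero_right, not_le] at hx
  nlinarith [norm_nonneg x, rn_pos n]

lemma phi_fderiv_apply (n : ℕ) (x v : E2) :
    fderiv ℝ (phi n) x v =
      deriv chi (‖x‖ ^ 2 / ((n : ℝ) + 1) ^ 2) *
        ((((n : ℝ) + 1) ^ 2)⁻¹ * (2 * (inner ℝ x v : ℝ))) := by
  rw [(phi_hasFDerivAt n x).fderiv]
  simp [smul_smul, mul_assoc, real_inner_comm]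

lemma phi_fderiv_bound {M : ℝ} (hM0 : 0 ≤ M) (hM : ∀ t, |deriv chi t| ≤ M) (n : ℕ)
    (x v : E2) (hv : ‖v‖ ≤ 1) :
    |fderiv ℝ (phi n) x v| ≤ 2 * Real.sqrt 2 * M / ((n : ℝ) + 1) := by
  rw [phi_fderiv_apply]
  by_cases hx : ‖x‖ ^ 2 ≤ 2 * ((n : ℝ) + 1) ^ 2
  · have hnx : ‖x‖ ≤ Real.sqrt 2 * ((n : ℝ) + 1) := by
      have h1 : ‖x‖ = Real.sqrt (‖x‖ ^ 2) := (Real.sqrt_sq (norm_nonneg x)).symm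
      rw [h1]
      calc Real.sqrt (‖x‖ ^ 2) ≤ Real.sqrt (2 * ((n : ℝ) + 1) ^ 2) := Real.sqrt_le_sqrt hx
        _ = Real.sqrt 2 * Real.sqrt (((n : ℝ) + 1) ^ 2) := Real.sqrt_mul (by norm_num) _
        _ = Real.sqrt 2 * ((n : ℝ) + 1) := by rw [Real.sqrt_sq (by positivity)]
    have hiv : |(inner ℝ x v : ℝ)| ≤ Real.sqrt 2 * ((n : ℝ) + 1) := by
      calc |(inner ℝ x v : ℝ)| ≤ ‖x‖ * ‖v‖ := abs_real_inner_le_norm x v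
        _ ≤ (Real.sqrt 2 * ((n : ℝ) + 1)) * 1 := by
            apply mul_le_mul hnx hv (norm_nonneg v) (by positivity)
        _ = Real.sqrt 2 * ((n : ℝ) + 1) := by ring
    rw [abs_mul, abs_mul, abs_mul]
    have hrn := rn_pos n
    calc |deriv chi (‖x‖ ^ 2 / ((n : ℝ) + 1) ^ 2)| *
          (|(((n : ℝ) + 1) ^ 2)⁻¹| * (|(2:ℝ)| * |(inner ℝ x v : ℝ)|))
        ≤ M * ((((n : ℝ) + 1) ^ 2)⁻¹ * (2 * (Real.sqrt 2 * ((n : ℝ) + 1)))) := by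
          apply mul_le_mul (hM _) _ (by positivity) hM0
          rw [abs_of_pos (by positivity : (0:ℝ) < (((n : ℝ) + 1) ^ 2)⁻¹), abs_of_pos (by norm_num : (0:ℝ) < (2:ℝ))]
          gcongr
      _ = 2 * Real.sqrt 2 * M / ((n : ℝ) + 1) := by
          field_simp
  · have : deriv chi (‖x‖ ^ 2 / ((n : ℝ) + 1) ^ 2) = 0 := by
      apply deriv_chi_zero
      right
      rw [lt_div_iff₀ (rn_pos n)]
      linarith [lt_of_not_ge hx]
    rw [this]
    simp
    positivity

def ee (i : Fin 2) : E2 := EuclideanSpace.single i 1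

lemma norm_ee (i : Fin 2) : ‖ee i‖ = 1 := by
  simp [ee, EuclideanSpace.norm_single]

def Dd (u : E2 → ℝ) (i : Fin 2) (x : E2) : ℝ := fderiv ℝ u x (ee i)

lemma lap_eq (u : E2 → ℝ) (x : E2) : lap u x = ∑ i : Fin 2, fderiv ℝ (Dd u i) x (ee i) := rfl

lemma contDiff_Dd {u : E2 → ℝ} (hu : ContDiff ℝ 2 u) (i : Fin 2) : ContDiff ℝ 1 (Dd u i) := by
  have h1 : ContDiff ℝ 1 (fderiv ℝ u) := hu.fderiv_right (by norm_num)
  exact (ContinuousLinearMap.apply ℝ ℝ (ee i)).contDiff.comp h1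

lemma continuous_Dd {u : E2 → ℝ} (hu : ContDiff ℝ 2 u) (i : Fin 2) : Continuous (Dd u i) :=
  ((contDiff_Dd hu i).continuous)

lemma continuous_fderiv_Dd {u : E2 → ℝ} (hu : ContDiff ℝ 2 u) (i j : Fin 2) :
    Continuous (fun x => fderiv ℝ (Dd u i) x (ee j)) := by
  have h1 : ContDiff ℝ 0 (fderiv ℝ (Dd u i)) := (contDiff_Dd hu i).fderiv_right (by norm_num)
  exact (ContinuousLinearMap.apply ℝ ℝ (ee j)).continuous.comp (h1.continuous)

lemma integrable_of_cont_supp {φ f : E2 → ℝ} (hφc : HasCompactSupport φ)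
    (hf : Continuous f) (h : ∀ x, x ∉ tsupport φ → f x = 0) :
    Integrable f (volume : Measure E2) :=
  hf.integrable_of_hasCompactSupport (HasCompactSupport.intro hφc h)

lemma Ddφ_zero {φ : E2 → ℝ} {x : E2} (hx : x ∉ tsupport φ) (i : Fin 2) : Dd φ i x = 0 := by
  have : fderiv ℝ φ x = 0 := by
    by_contra hne
    exact hx (support_fderiv_subset ℝ (Function.mem_support.mpr hne))
  simp [Dd, this]

lemma φ_zero {φ : E2 → ℝ} {x : E2} (hx : x ∉ tsupport φ) : φ x = 0 :=
  image_eq_zero_of_notMem_tsupport hx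

section green

variable {φ u v : E2 → ℝ} (hφ : ContDiff ℝ 1 φ) (hφc : HasCompactSupport φ)
  (hu : ContDiff ℝ 2 u) (hv : ContDiff ℝ 2 v)

lemma continuous_Ddφ (i : Fin 2) (hφ : ContDiff ℝ 1 φ) : Continuous (Dd φ i) :=
  (ContinuousLinearMap.apply ℝ ℝ (ee i)).continuous.comp
    (hφ.fderiv_right (m := 0) (by norm_num)).continuous

include hφ hφc hu hv in
lemma key_ibp (i : Fin 2) :
    ∫ x, (φ x * u x) * fderiv ℝ (Dd v i) x (ee i) =
      (- ∫ x, (φ x * Dd u i x) * Dd v i x) - ∫ x, (u x * Dd φ i x) * Dd v i x := by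
  have hφu : ContDiff ℝ 1 (fun x => φ x * u x) := hφ.mul (hu.of_le (by norm_num))
  have hCS : HasCompactSupport (fun x : E2 => φ x * u x) := hφc.mul_right
  have hcont_fd : Continuous (fun x => fderiv ℝ (fun y => φ y * u y) x (ee i)) :=
    (ContinuousLinearMap.apply ℝ ℝ (ee i)).continuous.comp
      (hφu.fderiv_right (m := 0) (by norm_num)).continuous
  have h1 : Integrable (fun x => fderiv ℝ (fun y => φ y * u y) x (ee i) * Dd v i x) volume := by
    apply integrable_of_cont_supp hφc (hcont_fd.mul (continuous_Dd hv i))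
    intro x hx
    have : fderiv ℝ (fun y => φ y * u y) x (ee i) = 0 := by
      have h0 : fderiv ℝ (fun y => φ y * u y) x = 0 := by
        by_contra hne
        have := support_fderiv_subset ℝ (Function.mem_support.mpr hne)
        have hsub : tsupport (fun y => φ y * u y) ⊆ tsupport φ := by
          apply closure_mono
          intro y hy
          simp only [Function.mem_support] at hy ⊢
          intro h0'
          exact hy (by simp [h0'])
        exact hx (hsub this)
      simp [h0]
    simp [this]
  have h2 : Integrable (fun x => (φ x * u x) * fderiv ℝ (Dd v i) x (ee i)) volume := by
    apply integrable_of_cont_supp hφc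
      (((hφ.continuous.mul hu.continuous)).mul (continuous_fderiv_Dd hv i i))
    intro x hx
    simp [φ_zero hx]
  have h3 : Integrable (fun x => (φ x * u x) * Dd v i x) volume := by
    apply integrable_of_cont_supp hφc
      (((hφ.continuous.mul hu.continuous)).mul (continuous_Dd hv i))
    intro x hx
    simp [φ_zero hx]
  have main := integral_mul_fderiv_eq_neg_fderiv_mul_of_integrable h1 h2 h3
    (fun x _ => hφu.differentiable (by norm_num) x) (fun x _ => (contDiff_Dd hv i).differentiable (by norm_num) x)
  rw [main]
  have hrw : ∀ x, fderiv ℝ (fun y => φ y * u y) x (ee i) =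
      φ x * Dd u i x + u x * Dd φ i x := by
    intro x
    rw [fderiv_fun_mul (hφ.differentiable (by norm_num) x) (hu.differentiable (by norm_num) x)]
    simp [Dd, smul_eq_mul]
  have hsplit : Integrable (fun x => (φ x * Dd u i x) * Dd v i x) volume := by
    apply integrable_of_cont_supp hφc
      ((hφ.continuous.mul (continuous_Dd hu i)).mul (continuous_Dd hv i))
    intro x hx
    simp [φ_zero hx]
  have hsplit2 : Integrable (fun x => (u x * Dd φ i x) * Dd v i x) volume := by
    apply integrable_of_cont_supp hφc
      ((hu.continuous.mul (continuous_Ddφ i hφ)).mul (continuous_Dd hv i))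
    intro x hx
    simp [Ddφ_zero hx]
  have : (fun x => fderiv ℝ (fun y => φ y * u y) x (ee i) * Dd v i x)
      = fun x => (φ x * Dd u i x) * Dd v i x + (u x * Dd φ i x) * Dd v i x := by
    funext x
    rw [hrw x]
    ring
  rw [this, integral_add hsplit hsplit2, neg_add, ← sub_eq_add_neg]

include hφ hφc hu hv in
lemma green :
    ∫ x, φ x * (u x * lap v x - v x * lap u x)
      = - ∑ i : Fin 2, ∫ x, Dd φ i x * (u x * Dd v i x - v x * Dd u i x) := by
  have intCS : ∀ f : E2 → ℝ, Continuous f → (∀ x, x ∉ tsupport φ → f x = 0) →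
      Integrable f (volume : Measure E2) := fun f hf h => integrable_of_cont_supp hφc hf h
  have c_phi : Continuous φ := hφ.continuous
  have c_u : Continuous u := hu.continuous
  have c_v : Continuous v := hv.continuous
  have int1 : ∀ i : Fin 2, Integrable
      (fun x => (φ x * u x) * fderiv ℝ (Dd v i) x (ee i)) (volume : Measure E2) := by
    intro i
    exact intCS _ ((c_phi.mul c_u).mul (continuous_fderiv_Dd hv i i))
      (fun x hx => by simp [φ_zero hx])
  have int2 : ∀ i : Fin 2, Integrable
      (fun x => (φ x * v x) * fderiv ℝ (Dd u i) x (ee i)) (volume : Measure E2) := by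
    intro i
    exact intCS _ ((c_phi.mul c_v).mul (continuous_fderiv_Dd hu i i))
      (fun x hx => by simp [φ_zero hx])
  have int3 : ∀ i : Fin 2, Integrable
      (fun x => (u x * Dd φ i x) * Dd v i x) (volume : Measure E2) := by
    intro i
    exact intCS _ ((c_u.mul (continuous_Ddφ i hφ)).mul (continuous_Dd hv i))
      (fun x hx => by simp [Ddφ_zero hx])
  have int4 : ∀ i : Fin 2, Integrable
      (fun x => (v x * Dd φ i x) * Dd u i x) (volume : Measure E2) := by
    intro i
    exact intCS _ ((c_v.mul (continuous_Ddφ i hφ)).mul (continuous_Dd hu i))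
      (fun x hx => by simp [Ddφ_zero hx])
  have hswap : ∀ i : Fin 2,
      ∫ x, (φ x * Dd u i x) * Dd v i x = ∫ x, (φ x * Dd v i x) * Dd u i x := by
    intro i
    congr 1
    funext x
    ring
  have hrhs : ∀ i : Fin 2,
      ∫ x, Dd φ i x * (u x * Dd v i x - v x * Dd u i x)
        = (∫ x, (u x * Dd φ i x) * Dd v i x) - ∫ x, (v x * Dd φ i x) * Dd u i x := by
    intro i
    rw [← integral_sub (int3 i) (int4 i)]
    congr 1
    funext x
    ring
  have hAi : ∀ i : Fin 2,
      (∫ x, ((φ x * u x) * fderiv ℝ (Dd v i) x (ee i)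
          - (φ x * v x) * fderiv ℝ (Dd u i) x (ee i)))
        = - ∫ x, Dd φ i x * (u x * Dd v i x - v x * Dd u i x) := by
    intro i
    rw [integral_sub (int1 i) (int2 i), key_ibp hφ hφc hu hv i, key_ibp hφ hφc hv hu i,
      hswap i, hrhs i]
    ring
  have hexp : (fun x => φ x * (u x * lap v x - v x * lap u x))
      = fun x => ∑ i : Fin 2, ((φ x * u x) * fderiv ℝ (Dd v i) x (ee i)
          - (φ x * v x) * fderiv ℝ (Dd u i) x (ee i)) := by
    funext x
    simp only [lap_eq, Fin.sum_univ_two]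
    ring
  rw [hexp, integral_finset_sum _ (fun i _ => by exact (int1 i).sub (int2 i))]
  rw [← Finset.sum_neg_distrib]
  exact Finset.sum_congr rfl (fun i _ => hAi i)

end green

lemma memL2_Dd {u : E2 → ℝ} (hu2 : ContDiff ℝ 2 u)
    (hu : MemLp (fun x => ‖fderiv ℝ u x‖) 2 (volume : Measure E2)) (i : Fin 2) :
    MemLp (Dd u i) 2 (volume : Measure E2) := by
  apply MemLp.of_le hu (continuous_Dd hu2 i).aestronglyMeasurable
  filter_upwards with x
  have := (fderiv ℝ u x).le_opNorm (ee i)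
  rw [norm_ee] at this
  simpa [Dd, Real.norm_eq_abs, abs_of_nonneg (norm_nonneg _)] using this

lemma integrable_mul_L2 {f g : E2 → ℝ} (hf : MemLp f 2 (volume : Measure E2))
    (hg : MemLp g 2 (volume : Measure E2)) :
    Integrable (fun x => f x * g x) (volume : Measure E2) := by
  rw [← memLp_one_iff_integrable]
  have := hg.smul (𝕜 := ℝ) hf (r := 1)
  exact this

lemma tendsto_inv_np1 (C : ℝ) :
    Filter.Tendsto (fun n : ℕ => C / ((n : ℝ) + 1)) Filter.atTop (nhds 0) := by
  have h := Filter.Tendsto.const_mul C tendsto_one_div_add_atTop_nhds_zero_nat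
  simpa [div_eq_mul_inv, mul_comm, one_div, mul_assoc] using h


/-- if `ξ ∈ H¹` solves the nonlocal linearized equation, then
`∫ w³ξ = 0`, so `ξ` solves `Δξ − ξ + c w²ξ = 0` with `c = 1 + (2a₁/a*)γ ∈ (1,3)`. -/
theorem nonlocal_linearized_orthogonality
    (w : E2 → ℝ)
    (hw_smooth : ContDiff ℝ 2 w)
    (hw_pos : ∀ x, 0 < w x)
    (hw_H1 : H1 w)
    (hw_eq : ∀ x, lap w x - w x + (w x) ^ 3 = 0)
    (astar : ℝ) (hastar : astar = ∫ x, w x ^ 2)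
    (a₁ : ℝ) (ha₁ : 0 < a₁) (ha₁' : a₁ < astar)
    (γ : ℝ) (hγ : γ ∈ Set.Ioo (0 : ℝ) 1)
    (ξ : E2 → ℝ) (hξ : H1 ξ) (hξ_smooth : ContDiff ℝ 2 ξ)
    (hξ_eq : ∀ x, lap ξ x - ξ x + (1 + (2 * a₁ / astar) * γ) * w x ^ 2 * ξ x =
      (2 * γ / astar) * w x * ∫ y, w y ^ 3 * ξ y) :
    (∫ y, w y ^ 3 * ξ y) = 0 ∧
    (∀ x, lap ξ x - ξ x + (1 + (2 * a₁ / astar) * γ) * w x ^ 2 * ξ x = 0) ∧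
    1 < 1 + (2 * a₁ / astar) * γ ∧ 1 + (2 * a₁ / astar) * γ < 3 := by
  obtain ⟨hγ0, hγ1⟩ := hγ
  have hw2int : Integrable (fun x => w x ^ 2) (volume : Measure E2) :=
    hw_H1.2.1.integrable_sq
  have hastar_pos : 0 < astar := by
    rw [hastar]
    rw [integral_pos_iff_support_of_nonneg (fun x => sq_nonneg (w x)) hw2int]
    have hsupp : Function.support (fun x => w x ^ 2) = Set.univ := by
      ext x
      simp [Function.mem_support, pow_eq_zero_iff, (hw_pos x).ne']
    rw [hsupp]
    exact IsOpen.measure_pos _ isOpen_univ Set.univ_nonempty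
  -- main claim
  have hI : (∫ y, w y ^ 3 * ξ y) = 0 := by
    by_cases hInt : Integrable (fun y => w y ^ 3 * ξ y) (volume : Measure E2)
    swap
    · exact integral_undef hInt
    set I : ℝ := ∫ y, w y ^ 3 * ξ y with hIdef
    -- integrability facts
    have hDw : ∀ i, MemLp (Dd w i) 2 (volume : Measure E2) :=
      fun i => memL2_Dd hw_smooth hw_H1.2.2 i
    have hDξ : ∀ i, MemLp (Dd ξ i) 2 (volume : Measure E2) :=
      fun i => memL2_Dd hξ_smooth hξ.2.2 i
    have gInt : ∀ i : Fin 2,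
        Integrable (fun x => w x * Dd ξ i x - ξ x * Dd w i x) (volume : Measure E2) :=
      fun i => (integrable_mul_L2 hw_H1.2.1 (hDξ i)).sub (integrable_mul_L2 hξ.2.1 (hDw i))
    obtain ⟨M, hM0, hM⟩ := chi_deriv_bound
    -- Green's identity with cutoff
    have green_n : ∀ n : ℕ,
        ∫ x, phi n x * (w x * lap ξ x - ξ x * lap w x)
          = - ∑ i : Fin 2, ∫ x, Dd (phi n) i x * (w x * Dd ξ i x - ξ x * Dd w i x) :=
      fun n => green (phi_contDiff n) (phi_compactSupport n) hw_smooth hξ_smooth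
    -- pointwise identity
    set G : E2 → ℝ := fun x =>
      (-(2 * a₁ / astar * γ)) * (w x ^ 3 * ξ x) + (2 * γ / astar * I) * w x ^ 2 with hGdef
    have hpt : ∀ x, w x * lap ξ x - ξ x * lap w x = G x := by
      intro x
      have h1 := hξ_eq x
      have h2 := hw_eq x
      have e1 : lap ξ x = ξ x - (1 + (2 * a₁ / astar) * γ) * w x ^ 2 * ξ x
          + (2 * γ / astar) * w x * I := by rw [hIdef]; linarith
      have e2 : lap w x = w x - w x ^ 3 := by linarith
      rw [e1, e2, hGdef]
      ring
    have hGint : Integrable G (volume : Measure E2) :=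
      (hInt.const_mul _).add (hw2int.const_mul _)
    have hGcont : Continuous G :=
      ((continuous_const.mul ((hw_smooth.continuous.pow 3).mul hξ_smooth.continuous)).add
        (continuous_const.mul (hw_smooth.continuous.pow 2)))
    -- LHS tendsto
    have hL : Filter.Tendsto (fun n : ℕ => ∫ x, phi n x * G x) Filter.atTop
        (nhds (∫ x, G x)) := by
      apply tendsto_integral_of_dominated_convergence (fun x => ‖G x‖)
      · intro n
        exact (((phi_contDiff n (m := 1)).continuous).mul hGcont).aestronglyMeasurable
      · exact hGint.norm
      · intro n
        filter_upwards with x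
        rw [norm_mul]
        have := phi_mem n x
        calc ‖phi n x‖ * ‖G x‖ ≤ 1 * ‖G x‖ := by
              apply mul_le_mul_of_nonneg_right _ (norm_nonneg _)
              rw [Real.norm_eq_abs, abs_le]
              constructor <;> linarith [this.1, this.2]
          _ = ‖G x‖ := one_mul _
      · filter_upwards with x
        apply Filter.Tendsto.congr' _ tendsto_const_nhds
        filter_upwards [Filter.eventually_ge_atTop ⌈‖x‖⌉₊] with n hn
        have hxn : ‖x‖ ^ 2 ≤ ((n : ℝ) + 1) ^ 2 := by
          have h1 : ‖x‖ ≤ (n : ℝ) + 1 := by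
            calc ‖x‖ ≤ (⌈‖x‖⌉₊ : ℝ) := Nat.le_ceil _
              _ ≤ (n : ℝ) := by exact_mod_cast hn

              _ ≤ (n : ℝ) + 1 := by linarith
          exact pow_le_pow_left₀ (norm_nonneg x) h1 2
        rw [phi_one n hxn, one_mul]
    -- RHS tendsto 0
    have hR : Filter.Tendsto
        (fun n : ℕ => ∑ i : Fin 2, ∫ x, Dd (phi n) i x * (w x * Dd ξ i x - ξ x * Dd w i x))
        Filter.atTop (nhds 0) := by
      set S : ℝ := ∑ i : Fin 2, ∫ x, ‖w x * Dd ξ i x - ξ x * Dd w i x‖ with hSdef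
      have hS0 : 0 ≤ S := Finset.sum_nonneg fun i _ => integral_nonneg fun x => norm_nonneg _
      refine squeeze_zero_norm (fun n => ?_) (tendsto_inv_np1 (2 * Real.sqrt 2 * M * S))
      ·
        have hterm : ∀ i : Fin 2,
            ‖∫ x, Dd (phi n) i x * (w x * Dd ξ i x - ξ x * Dd w i x)‖
              ≤ (2 * Real.sqrt 2 * M / ((n : ℝ) + 1)) *
                  ∫ x, ‖w x * Dd ξ i x - ξ x * Dd w i x‖ := by
          intro i
          calc ‖∫ x, Dd (phi n) i x * (w x * Dd ξ i x - ξ x * Dd w i x)‖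
              ≤ ∫ x, ‖Dd (phi n) i x * (w x * Dd ξ i x - ξ x * Dd w i x)‖ :=
                norm_integral_le_integral_norm _
            _ ≤ ∫ x, (2 * Real.sqrt 2 * M / ((n : ℝ) + 1)) *
                  ‖w x * Dd ξ i x - ξ x * Dd w i x‖ := by
                apply integral_mono_of_nonneg
                · filter_upwards with x; exact norm_nonneg _
                · exact (gInt i).norm.const_mul _
                · filter_upwards with x
                  rw [norm_mul]
                  apply mul_le_mul_of_nonneg_right _ (norm_nonneg _)
                  rw [Real.norm_eq_abs]
                  exact phi_fderiv_bound hM0 hM n x (ee i) (le_of_eq (norm_ee i))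
            _ = (2 * Real.sqrt 2 * M / ((n : ℝ) + 1)) *
                  ∫ x, ‖w x * Dd ξ i x - ξ x * Dd w i x‖ := integral_const_mul _ _
        calc ‖∑ i : Fin 2, ∫ x, Dd (phi n) i x * (w x * Dd ξ i x - ξ x * Dd w i x)‖
            ≤ ∑ i : Fin 2, ‖∫ x, Dd (phi n) i x * (w x * Dd ξ i x - ξ x * Dd w i x)‖ :=
              norm_sum_le _ _
          _ ≤ ∑ i : Fin 2, (2 * Real.sqrt 2 * M / ((n : ℝ) + 1)) *
                ∫ x, ‖w x * Dd ξ i x - ξ x * Dd w i x‖ :=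
              Finset.sum_le_sum fun i _ => hterm i
          _ = (2 * Real.sqrt 2 * M * S) / ((n : ℝ) + 1) := by
              rw [hSdef, Finset.mul_sum, Finset.sum_div]
              exact Finset.sum_congr rfl fun i _ => by ring
    -- combine
    have hEq : ∀ n : ℕ, ∫ x, phi n x * G x
        = - ∑ i : Fin 2, ∫ x, Dd (phi n) i x * (w x * Dd ξ i x - ξ x * Dd w i x) := by
      intro n
      rw [← green_n n]
      congr 1
      funext x
      rw [hpt x]
    have hG0 : (∫ x, G x) = 0 := by
      have h1 : Filter.Tendsto (fun n : ℕ => ∫ x, phi n x * G x) Filter.atTop (nhds 0) := by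
        simp only [hEq]
        simpa using hR.neg
      exact tendsto_nhds_unique hL h1
    -- compute ∫ G
    have hGsplit : (∫ x, G x)
        = (-(2 * a₁ / astar * γ)) * I + (2 * γ / astar * I) * astar := by
      rw [hGdef, integral_add (hInt.const_mul _) (hw2int.const_mul _),
        integral_const_mul, integral_const_mul, ← hIdef, ← hastar]
    rw [hGsplit] at hG0
    have hcoef : -(2 * a₁ / astar * γ) * I + 2 * γ / astar * I * astar
        = I * (2 * γ * (1 - a₁ / astar)) := by
      field_simp
      ring
    rw [hcoef] at hG0
    have hpos : 0 < 2 * γ * (1 - a₁ / astar) := by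
      have : a₁ / astar < 1 := (div_lt_one hastar_pos).mpr ha₁'
      have h2 : 0 < 1 - a₁ / astar := by linarith
      positivity
    have := mul_eq_zero.mp hG0
    rcases this with h | h
    · exact h
    · exact absurd h (ne_of_gt hpos)
  refine ⟨hI, ?_, ?_, ?_⟩
  · intro x
    have := hξ_eq x
    rw [hI] at this
    simpa using this
  · have : 0 < 2 * a₁ / astar * γ := by positivity
    linarith
  · have h1 : 2 * a₁ / astar < 2 := by
      rw [div_lt_iff₀ hastar_pos]
      linarith
    have h2 : 0 < 2 * a₁ / astar := by positivity
    nlinarith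
end
end
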